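/- Let α > 0 and a > 0. If αa > 1, then there exists exactly one κ ∈ (0, α/2) satisfying (α/2)·exp(−2κa) = α/2 − κ; if αa ≤ 1, then no κ ∈ (0, α/2) satisfies this equation. -/

import Mathlib

/-- for `α, a > 0`, the equation `(α/2)·exp(−2κa) = α/2 − κ` has
exactly one solution in `(0, α/2)` when `αa > 1`, and none when `αa ≤ 1`. -/
theorem excited_state_kappa (α a : ℝ) (hα : 0 < α) (ha : 0 < a) :
    (1 < α * a →
      ∃! κ : ℝ, κ ∈ Set.Ioo 0 (α / 2) ∧
        (α / 2) * Real.exp (-2 * κ * a) = α / 2 - κ) ∧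
    (α * a ≤ 1 →
      ∀ κ ∈ Set.Ioo 0 (α / 2),
        (α / 2) * Real.exp (-2 * κ * a) ≠ α / 2 - κ) := by
  set g : ℝ → ℝ := fun κ => α / 2 * Real.exp (-2 * κ * a) + κ - α / 2 with hg
  have hderiv : ∀ κ : ℝ, HasDerivAt g (1 - α * a * Real.exp (-2 * κ * a)) κ := by
    intro κ
    have h1 : HasDerivAt (fun κ : ℝ => -2 * κ * a) (-2 * a) κ := by
      simpa using ((hasDerivAt_id κ).const_mul (-2)).mul_const a
    have h2 : HasDerivAt (fun κ : ℝ => α / 2 * Real.exp (-2 * κ * a))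
        (α / 2 * (Real.exp (-2 * κ * a) * (-2 * a))) κ := (h1.exp).const_mul (α / 2)
    have h3 := (h2.add (hasDerivAt_id κ)).sub_const (α / 2)
    exact h3.congr_deriv (by ring)
  have hgcont : Continuous g := by
    apply Continuous.sub
    apply Continuous.add
    · exact continuous_const.mul ((continuous_const.mul continuous_id |>.mul continuous_const).rexp)
    · exact continuous_id
    · exact continuous_const
  have hg0 : g 0 = 0 := by simp [hg]
  -- uniqueness of positive roots
  have huniq : ∀ κ₁ κ₂ : ℝ, 0 < κ₁ → 0 < κ₂ → g κ₁ = 0 → g κ₂ = 0 → κ₁ = κ₂ := by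
    have key : ∀ κ₁ κ₂ : ℝ, 0 < κ₁ → κ₁ < κ₂ → g κ₁ = 0 → g κ₂ = 0 → False := by
      intro κ₁ κ₂ h1 h12 e1 e2
      obtain ⟨c₁, hc₁, hc₁'⟩ := exists_hasDerivAt_eq_zero (f := g)
        (f' := fun κ => 1 - α * a * Real.exp (-2 * κ * a)) h1 hgcont.continuousOn
        (by rw [hg0, e1]) (fun x _ => hderiv x)
      obtain ⟨c₂, hc₂, hc₂'⟩ := exists_hasDerivAt_eq_zero (f := g)
        (f' := fun κ => 1 - α * a * Real.exp (-2 * κ * a)) h12 hgcont.continuousOn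
        (by rw [e1, e2]) (fun x _ => hderiv x)
      have hexp : Real.exp (-2 * c₁ * a) = Real.exp (-2 * c₂ * a) := by
        have hαa : α * a ≠ 0 := by positivity
        have : α * a * Real.exp (-2 * c₁ * a) = α * a * Real.exp (-2 * c₂ * a) := by
          linarith
        exact mul_left_cancel₀ hαa this
      have : -2 * c₁ * a = -2 * c₂ * a := Real.exp_injective hexp
      have hcc : c₁ = c₂ := by
        have ha' : a ≠ 0 := ne_of_gt ha
        field_simp at this
        linarith
      have : c₁ < c₂ := lt_trans hc₁.2 hc₂.1
      linarith
    intro κ₁ κ₂ h1 h2 e1 e2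
    rcases lt_trichotomy κ₁ κ₂ with h | h | h
    · exact absurd (key κ₁ κ₂ h1 h e1 e2) (fun x => x)
    · exact h
    · exact absurd (key κ₂ κ₁ h2 h e2 e1) (fun x => x)
  constructor
  · -- existence and uniqueness when 1 < α a
    intro hαa
    set κ₀ : ℝ := min ((α * a - 1) / (2 * a)) (α / 4) with hκ₀
    have hκ₀pos : 0 < κ₀ := by
      apply lt_min
      · apply div_pos (by linarith) (by linarith)
      · linarith
    have hκ₀lt : κ₀ < α / 2 := lt_of_le_of_lt (min_le_right _ _) (by linarith)
    have hκ₀le : 2 * κ₀ * a ≤ α * a - 1 := by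
      calc 2 * κ₀ * a = κ₀ * (2 * a) := by ring
        _ ≤ ((α * a - 1) / (2 * a)) * (2 * a) := by
            apply mul_le_mul_of_nonneg_right (min_le_left _ _) (by linarith)
        _ = α * a - 1 := by field_simp
    have hgneg : g κ₀ < 0 := by
      have hexp : 1 + 2 * κ₀ * a < Real.exp (2 * κ₀ * a) := by
        have := Real.add_one_lt_exp (x := 2 * κ₀ * a) (by positivity)
        linarith
      have hx : (0:ℝ) < 1 + 2 * κ₀ * a := by positivity
      have h1 : Real.exp (-2 * κ₀ * a) < 1 / (1 + 2 * κ₀ * a) := by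
        rw [lt_div_iff₀ hx]
        have : Real.exp (-2 * κ₀ * a) * Real.exp (2 * κ₀ * a) = 1 := by
          rw [← Real.exp_add]; ring_nf; exact Real.exp_zero
        nlinarith [Real.exp_pos (-2 * κ₀ * a)]
      have h2 : α / 2 * (1 / (1 + 2 * κ₀ * a)) ≤ α / 2 - κ₀ := by
        rw [mul_one_div, div_le_iff₀ hx]
        nlinarith [mul_nonneg hκ₀pos.le (sub_nonneg.mpr hκ₀le)]
      have : α / 2 * Real.exp (-2 * κ₀ * a) < α / 2 - κ₀ := by
        calc α / 2 * Real.exp (-2 * κ₀ * a) < α / 2 * (1 / (1 + 2 * κ₀ * a)) := by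
              apply mul_lt_mul_of_pos_left h1 (by linarith)
          _ ≤ α / 2 - κ₀ := h2
      simp only [hg]; linarith
    have hgpos : 0 < g (α / 2) := by
      simp only [hg]
      have := Real.exp_pos (-2 * (α / 2) * a)
      nlinarith
    obtain ⟨κ, hκmem, hκval⟩ := intermediate_value_Ioo (le_of_lt hκ₀lt)
      hgcont.continuousOn (Set.mem_Ioo.mpr ⟨hgneg, hgpos⟩)
    refine ⟨κ, ⟨⟨lt_trans hκ₀pos hκmem.1, hκmem.2⟩, by simp only [hg] at hκval; linarith⟩, ?_⟩
    rintro y ⟨⟨hy1, hy2⟩, hy3⟩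
    have hyg : g y = 0 := by simp only [hg]; linarith
    have hκg : g κ = 0 := hκval
    exact huniq y κ hy1 (lt_trans hκ₀pos hκmem.1) hyg hκg
  · -- no solution when α a ≤ 1
    intro hαa κ hκ
    obtain ⟨hκ1, hκ2⟩ := hκ
    have hmono : StrictMonoOn g (Set.Ici 0) := by
      apply strictMonoOn_of_deriv_pos (convex_Ici 0) hgcont.continuousOn
      intro x hx
      rw [interior_Ici] at hx
      rw [(hderiv x).deriv]
      have hexplt : Real.exp (-2 * x * a) < 1 := by
        rw [Real.exp_lt_one_iff]
        have : 0 < x := hx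
        nlinarith
      nlinarith [Real.exp_pos (-2 * x * a)]
    have : g 0 < g κ := hmono (Set.self_mem_Ici) (Set.mem_Ici.mpr (le_of_lt hκ1)) hκ1
    rw [hg0] at this
    simp only [hg] at this
    intro h
    linarith
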